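/- arXiv:1205.2102 — 2 statements merged into one kernel-verified Lean document; each statement's English description precedes it below -/
import Mathlib

section
/- Let G be a group, S ⊆ G with S ∪ S⁻¹ generating G, and let C be the submonoid of G generated by S (the cone generated by S). Then the oscillation pseudo-norm ν_osc = ν⁺ − ν⁻ is non-degenerate (ν_osc(g) = 0 implies g = 1) if and only if the relation ≤_C induced by C is antisymmetric, i.e. C ∩ C⁻¹ = {1}. -/
private lemma prod_inv_mem {G : Type*} [Group G] {S : Set G} :
    ∀ (m : List G), (∀ x ∈ m, x⁻¹ ∈ S) → m.prod⁻¹ ∈ Submonoid.closure S := by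
  intro m
  induction m with
  | nil => intro _; simpa using one_mem (Submonoid.closure S)
  | cons a m ih =>
    intro h
    rw [List.prod_cons, mul_inv_rev]
    exact mul_mem (ih fun x hx => h x (List.mem_cons_of_mem _ hx))
      (Submonoid.subset_closure (h a (List.mem_cons_self)))

/-- The oscillation pseudo-norm `ν_osc = ν⁺ − ν⁻` is non-degenerate if and only if
the cone `C` generated by `S` satisfies `C ∩ C⁻¹ = {1}`, i.e. `≤_C` is antisymmetric. -/
theorem stmt_10 {G : Type*} [Group G] (S : Set G)
    (hgen : ∀ g : G, ∃ l : List (G × Bool),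
      (∀ p ∈ l, (p.2 = true → p.1 ∈ S) ∧ (p.2 = false → p.1⁻¹ ∈ S)) ∧
      (l.map Prod.fst).prod = g)
    (nplus nminus : G → ℕ)
    (hplus : ∀ g : G, nplus g = sInf {n : ℕ | ∃ l : List (G × Bool),
      (∀ p ∈ l, (p.2 = true → p.1 ∈ S) ∧ (p.2 = false → p.1⁻¹ ∈ S)) ∧
      (l.map Prod.fst).prod = g ∧ l.countP (fun p => p.2) = n})
    (hminus : ∀ g : G, nminus g = sInf {n : ℕ | ∃ l : List (G × Bool),
      (∀ p ∈ l, (p.2 = true → p.1 ∈ S) ∧ (p.2 = false → p.1⁻¹ ∈ S)) ∧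
      (l.map Prod.fst).prod = g ∧ l.countP (fun p => !p.2) = n})
    :
    (∀ g : G, (nplus g : ℤ) - (-(nminus g : ℤ)) = 0 → g = 1) ↔
      (∀ g : G, g ∈ Submonoid.closure S → g⁻¹ ∈ Submonoid.closure S → g = 1) := by
  have hminus0 : ∀ g : G, nminus g = 0 ↔ g ∈ Submonoid.closure S := by
    intro g
    rw [hminus g, Nat.sInf_eq_zero]
    constructor
    · rintro (⟨l, hl, hprod, hcount⟩ | hempty)
      · subst hprod
        refine Submonoid.list_prod_mem _ ?_
        intro x hx
        rcases List.mem_map.mp hx with ⟨p, hp, rfl⟩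
        have := (hl p hp).1
        have hp2 : p.2 = true := by
          by_contra h
          have : p.2 = false := by simpa using h
          have : 0 < l.countP (fun p => !p.2) := by
            apply List.countP_pos_iff.mpr
            exact ⟨p, hp, by simp [this]⟩
          omega
        exact Submonoid.subset_closure (this hp2)
      · exfalso
        obtain ⟨l, hl, hprod⟩ := hgen g
        exact Set.eq_empty_iff_forall_notMem.mp hempty _ ⟨l, hl, hprod, rfl⟩
    · intro hg
      left
      obtain ⟨m, hm, hprod⟩ := Submonoid.exists_list_of_mem_closure hg
      refine ⟨m.map (fun s => (s, true)), ?_, ?_, ?_⟩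
      · intro p hp
        rcases List.mem_map.mp hp with ⟨s, hs, rfl⟩
        exact ⟨fun _ => hm s hs, by simp⟩
      · rw [List.map_map]
        simpa [Function.comp_def] using hprod
      · simp [List.countP_map, Function.comp]
  have hplus0 : ∀ g : G, nplus g = 0 ↔ g⁻¹ ∈ Submonoid.closure S := by
    intro g
    rw [hplus g, Nat.sInf_eq_zero]
    constructor
    · rintro (⟨l, hl, hprod, hcount⟩ | hempty)
      · subst hprod
        apply prod_inv_mem
        intro x hx
        rcases List.mem_map.mp hx with ⟨p, hp, rfl⟩
        have := (hl p hp).2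
        have hp2 : p.2 = false := by
          by_contra h
          have : p.2 = true := by simpa using h
          have : 0 < l.countP (fun p => p.2) := by
            apply List.countP_pos_iff.mpr
            exact ⟨p, hp, by simp [this]⟩
          omega
        exact this hp2
      · exfalso
        obtain ⟨l, hl, hprod⟩ := hgen g
        exact Set.eq_empty_iff_forall_notMem.mp hempty _ ⟨l, hl, hprod, rfl⟩
    · intro hg
      left
      obtain ⟨m, hm, hprod⟩ := Submonoid.exists_list_of_mem_closure hg
      refine ⟨(m.map (fun s => (s⁻¹, false))).reverse, ?_, ?_, ?_⟩
      · intro p hp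
        rw [List.mem_reverse] at hp
        rcases List.mem_map.mp hp with ⟨s, hs, rfl⟩
        exact ⟨by simp, fun _ => by simpa using hm s hs⟩
      · rw [List.map_reverse, List.map_map]
        have : (m.map ((Prod.fst) ∘ (fun s => (s⁻¹, false)))) = m.map (fun x => x⁻¹) := by
          simp [Function.comp]
        rw [this, ← List.prod_inv_reverse, hprod, inv_inv]
      · simp [List.countP_map, Function.comp]
  constructor
  · intro h g hg hginv
    apply h
    have h1 : nplus g = 0 := (hplus0 g).mpr hginv
    have h2 : nminus g = 0 := (hminus0 g).mpr hg
    rw [h1, h2]; ring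
  · intro h g hg
    have h1 : nplus g = 0 ∧ nminus g = 0 := by omega
    exact h g ((hminus0 g).mp h1.2) ((hplus0 g).mp h1.1)
end

section
/- Let G be a group, S ⊆ G with S ∪ S⁻¹ generating G and S invariant by conjugation, and let C be the cone generated by S. Assume C ∩ C⁻¹ = {1}, so that ≤_C is a bi-invariant partial order and ν_osc = ν⁺ − ν⁻ is a non-degenerate conjugation-invariant norm. Then the induced metric d(a,b) = ν_osc(a⁻¹b) is compatible with the partial order: if 1 ≤_C a ≤_C b then ν_osc(a) ≤ ν_osc(b). Equivalently, for a ≤_C b ≤_C c one has d(a,b) ≤ d(a,c). -/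
/-- If `S` is conjugation-invariant and the cone `C = ⟨S⟩` satisfies `C ∩ C⁻¹ = {1}`,
then the oscillation norm is compatible with the order `≤_C`: `1 ≤_C a ≤_C b` implies
`ν_osc(a) ≤ ν_osc(b)`. -/
theorem stmt_11 {G : Type*} [Group G] (S : Set G)
    (hgen : ∀ g : G, ∃ l : List (G × Bool),
      (∀ p ∈ l, (p.2 = true → p.1 ∈ S) ∧ (p.2 = false → p.1⁻¹ ∈ S)) ∧
      (l.map Prod.fst).prod = g)
    (nplus nminus : G → ℕ)
    (hplus : ∀ g : G, nplus g = sInf {n : ℕ | ∃ l : List (G × Bool),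
      (∀ p ∈ l, (p.2 = true → p.1 ∈ S) ∧ (p.2 = false → p.1⁻¹ ∈ S)) ∧
      (l.map Prod.fst).prod = g ∧ l.countP (fun p => p.2) = n})
    (hminus : ∀ g : G, nminus g = sInf {n : ℕ | ∃ l : List (G × Bool),
      (∀ p ∈ l, (p.2 = true → p.1 ∈ S) ∧ (p.2 = false → p.1⁻¹ ∈ S)) ∧
      (l.map Prod.fst).prod = g ∧ l.countP (fun p => !p.2) = n})
    (hconjS : ∀ g : G, (fun x => g * x * g⁻¹) '' S ⊆ S)
    (hanti : ∀ g : G, g ∈ Submonoid.closure S → g⁻¹ ∈ Submonoid.closure S → g = 1) :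
    ∀ a b : G, a ∈ Submonoid.closure S → a⁻¹ * b ∈ Submonoid.closure S →
      (nplus a : ℤ) - (-(nminus a : ℤ)) ≤ (nplus b : ℤ) - (-(nminus b : ℤ)) := by
  intro a b ha hc
  -- For any element of the cone, nminus vanishes.
  have hzero : ∀ g : G, g ∈ Submonoid.closure S → nminus g = 0 := by
    intro g hg
    obtain ⟨L, hL, hLprod⟩ := Submonoid.exists_list_of_mem_closure hg
    rw [hminus g, Nat.sInf_eq_zero]
    left
    refine ⟨L.map (fun x => (x, true)), ?_, ?_, ?_⟩
    · intro p hp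
      simp only [List.mem_map] at hp
      obtain ⟨x, hx, rfl⟩ := hp
      exact ⟨fun _ => hL x hx, by simp⟩
    · simp [List.map_map, Function.comp_def, hLprod]
    · simp [List.countP_map, Function.comp_def]
  have hb : b ∈ Submonoid.closure S := by
    have := Submonoid.mul_mem _ ha hc
    rwa [mul_inv_cancel_left] at this
  -- nplus a ≤ nplus b
  have hple : nplus a ≤ nplus b := by
    -- the defining set for b is nonempty
    have hne : {n : ℕ | ∃ l : List (G × Bool),
        (∀ p ∈ l, (p.2 = true → p.1 ∈ S) ∧ (p.2 = false → p.1⁻¹ ∈ S)) ∧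
        (l.map Prod.fst).prod = b ∧ l.countP (fun p => p.2) = n}.Nonempty := by
      obtain ⟨l, hl, hlp⟩ := hgen b
      exact ⟨l.countP (fun p => p.2), l, hl, hlp, rfl⟩
    have hmem := Nat.sInf_mem hne
    rw [← hplus b] at hmem
    obtain ⟨lb, hlb, hlbprod, hlbcount⟩ := hmem
    -- write c := a⁻¹ * b as a positive word, then invert it
    obtain ⟨L, hL, hLprod⟩ := Submonoid.exists_list_of_mem_closure hc
    set lc : List (G × Bool) := (L.reverse.map (fun x => (x⁻¹, false))) with hlc
    have hlcmem : ∀ p ∈ lc, (p.2 = true → p.1 ∈ S) ∧ (p.2 = false → p.1⁻¹ ∈ S) := by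
      intro p hp
      simp only [hlc, List.mem_map, List.mem_reverse] at hp
      obtain ⟨x, hx, rfl⟩ := hp
      exact ⟨by simp, fun _ => by simpa using hL x hx⟩
    have key : ∀ M : List G, (M.reverse.map (fun x : G => x⁻¹)).prod = M.prod⁻¹ := by
      intro M
      induction M with
      | nil => simp
      | cons x xs ih =>
        simp only [List.reverse_cons, List.map_append, List.prod_append, List.prod_cons,
          mul_inv_rev, ih]
        simp
    have hlcprod : (lc.map Prod.fst).prod = (a⁻¹ * b)⁻¹ := by
      have : lc.map Prod.fst = L.reverse.map (fun x : G => x⁻¹) := by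
        simp [hlc, List.map_map, Function.comp_def]
      rw [this, key, hLprod]
    rw [hplus a]
    apply Nat.sInf_le
    refine ⟨lb ++ lc, ?_, ?_, ?_⟩
    · intro p hp
      rcases List.mem_append.mp hp with h | h
      · exact hlb p h
      · exact hlcmem p h
    · rw [List.map_append, List.prod_append, hlbprod, hlcprod]
      group
    · rw [List.countP_append, hlbcount]
      have : lc.countP (fun p => p.2) = 0 := by
        simp [hlc, List.countP_map, Function.comp_def]
      omega
  have h1 := hzero a ha
  have h2 := hzero b hb
  rw [h1, h2]
  simp only [Nat.cast_zero, neg_zero, sub_zero]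
  exact_mod_cast hple
end
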